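/- Let Γ be the ladder diagram associated with integers 0 = n₀ < n₁ < ⋯ < n_r < n_{r+1} = n, let γ be a face of Γ, and suppose the L-shaped block L_k(p,q) is rigid in γ. Let Q_k(p,q) := ⋃_{0 ≤ i, j ≤ k−1} □^{(p+i, q+j)} = [p−1, p+k−1] × [q−1, q+k−1] be the k×k square of unit boxes containing L_k(p,q). Then no edge of γ lies in the interior of Q_k(p,q); i.e., for no edge e of γ are both unit boxes adjacent to e contained in Q_k(p,q). -/
import Mathlib


/-- A grid edge, encoded by its lower-left endpoint together with its direction:
`(v, false)` is the horizontal edge from `v` to `v + (1, 0)`, and `(v, true)` is the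
vertical edge from `v` to `v + (0, 1)`. -/
abbrev GridEdge := (ℤ × ℤ) × Bool

/-- The unit step of an edge direction. -/
def edir : Bool → ℤ × ℤ
  | false => (1, 0)
  | true => (0, 1)

/-- The vertex set of the ladder diagram `Γ(n₁, …, n_r; n)`:
`V = ⋃_{j=0}^{r} (([n_j, n_{j+1}] × [0, n − n_{j+1}]) ∩ ℤ²)`. -/
def ladderV (r n : ℕ) (nseq : ℕ → ℕ) : Set (ℤ × ℤ) :=
  {v | ∃ j ≤ r, (nseq j : ℤ) ≤ v.1 ∧ v.1 ≤ (nseq (j + 1) : ℤ) ∧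
        0 ≤ v.2 ∧ v.2 ≤ (n : ℤ) - (nseq (j + 1) : ℤ)}

/-- A positive path on the ladder diagram: a lattice path `p 0, p 1, …, p n` starting at the
origin, each step increasing one coordinate by `1`, all of whose vertices lie in the ladder
diagram.  (Such a path is exactly a shortest path in the ladder diagram from the origin to a
top vertex, since `p n` automatically has coordinate sum `n`.) -/
def IsPositivePath (r n : ℕ) (nseq : ℕ → ℕ) (p : ℕ → ℤ × ℤ) : Prop :=
  p 0 = (0, 0) ∧
    (∀ i < n, p (i + 1) = p i + edir false ∨ p (i + 1) = p i + edir true) ∧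
    (∀ i ≤ n, p i ∈ ladderV r n nseq)

/-- The set of grid edges traversed by a path of length `n`. -/
def pathEdges (n : ℕ) (p : ℕ → ℤ × ℤ) : Set GridEdge :=
  {e | ∃ i < n, p i = e.1 ∧ p (i + 1) = e.1 + edir e.2}

/-- A face `γ` of the ladder diagram, encoded by its edge set `E`: a union of positive paths
which contains all top vertices (every edge of `E` lies on a positive path whose edges all
belong to `E`, and every top vertex is the endpoint of such a path). -/
def IsFaceOf (r n : ℕ) (nseq : ℕ → ℕ) (E : Set GridEdge) : Prop :=
  (∀ e ∈ E, ∃ p, IsPositivePath r n nseq p ∧ e ∈ pathEdges n p ∧ pathEdges n p ⊆ E) ∧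
    (∀ v ∈ ladderV r n nseq, v.1 + v.2 = (n : ℤ) →
      ∃ p, IsPositivePath r n nseq p ∧ pathEdges n p ⊆ E ∧ p n = v)

/-- The first of the two unit boxes adjacent to a grid edge, encoded by its top-right
lattice point. -/
def adjBox1 (e : GridEdge) : ℤ × ℤ :=
  match e.2 with
  | false => (e.1.1 + 1, e.1.2)
  | true => (e.1.1, e.1.2 + 1)

/-- The second of the two unit boxes adjacent to a grid edge, encoded by its top-right
lattice point. -/
def adjBox2 (e : GridEdge) : ℤ × ℤ := (e.1.1 + 1, e.1.2 + 1)

/-- A grid edge lies in the interior of a region (a union of closed unit boxes, encoded by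
the set `R` of top-right lattice points of its boxes) iff both adjacent unit boxes belong
to the region. -/
def EdgeInInterior (R : ℤ × ℤ → Prop) (e : GridEdge) : Prop :=
  R (adjBox1 e) ∧ R (adjBox2 e)

/-- Membership of the unit box with top-right vertex `c` in the `L`-shaped block `L_k(p,q)`:
`L_k(p,q) = ⋃_{i=0}^{k−1} (□^{(p, q+i)} ∪ □^{(p+i, q)})`. -/
def InLBlock (k : ℕ) (p q : ℤ) (c : ℤ × ℤ) : Prop :=
  (c.1 = p ∧ q ≤ c.2 ∧ c.2 ≤ q + (k : ℤ) - 1) ∨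
    (c.2 = q ∧ p ≤ c.1 ∧ c.1 ≤ p + (k : ℤ) - 1)

/-- `L_k(p,q)` is rigid in the face with edge set `E`: no edge of `E` lies in the interior of
`L_k(p,q)`, and both the rightmost edge (from `(p+k−1, q−1)` to `(p+k−1, q)`) and the top edge
(from `(p−1, q+k−1)` to `(p, q+k−1)`) of `L_k(p,q)` belong to `E`. -/
def IsRigid (k : ℕ) (p q : ℤ) (E : Set GridEdge) : Prop :=
  (∀ e ∈ E, ¬ EdgeInInterior (InLBlock k p q) e) ∧
    ((p + (k : ℤ) - 1, q - 1), true) ∈ E ∧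
    ((p - 1, q + (k : ℤ) - 1), false) ∈ E

private lemma exists_entry (pred : ℕ → Prop) :
    ∀ i, ¬ pred 0 → pred i → ∃ j < i, ¬ pred j ∧ pred (j + 1) := by
  intro i
  induction i with
  | zero => intro h0 h; exact absurd h h0
  | succ m ih =>
    intro h0 h
    by_cases hm : pred m
    · obtain ⟨j, hj, h1, h2⟩ := ih h0 hm
      exact ⟨j, Nat.lt_succ_of_lt hj, h1, h2⟩
    · exact ⟨m, Nat.lt_succ_self m, hm, h⟩

private lemma path_mono {n : ℕ} {P : ℕ → ℤ × ℤ}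
    (hstep : ∀ i < n, P (i + 1) = P i + edir false ∨ P (i + 1) = P i + edir true) :
    ∀ a b, a ≤ b → b ≤ n → (P a).1 ≤ (P b).1 ∧ (P a).2 ≤ (P b).2 := by
  intro a b hab hbn
  induction b with
  | zero =>
    have : a = 0 := Nat.le_zero.mp hab
    subst this; exact ⟨le_refl _, le_refl _⟩
  | succ m ih =>
    rcases Nat.lt_or_ge a (m + 1) with h | h
    · have hm : m < n := hbn
      have h2 := ih (Nat.lt_succ_iff.mp h) (Nat.le_of_lt hm)
      rcases hstep m hm with he | he <;> rw [he] <;>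
        simp only [edir, Prod.fst_add, Prod.snd_add] <;> constructor <;> omega
    · have : a = m + 1 := le_antisymm hab h
      subst this; exact ⟨le_refl _, le_refl _⟩

/-- Let `Γ` be the ladder diagram associated with
`0 = n₀ < n₁ < ⋯ < n_r < n_{r+1} = n`, let `γ` (with edge set `E`) be a face of `Γ`, and
suppose `L_k(p,q)` is rigid in `γ`.  Then no edge of `γ` lies in the interior of the `k × k`
square `Q_k(p,q) = [p−1, p+k−1] × [q−1, q+k−1]` of unit boxes containing `L_k(p,q)`. -/
theorem statement15 (r n : ℕ) (nseq : ℕ → ℕ)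
    (h0 : nseq 0 = 0) (hlast : nseq (r + 1) = n)
    (hmono : ∀ j ≤ r, nseq j < nseq (j + 1))
    (E : Set GridEdge) (hE : IsFaceOf r n nseq E)
    (k : ℕ) (hk : 1 ≤ k) (p q : ℤ) (hrigid : IsRigid k p q E) :
    ∀ e ∈ E, ¬ EdgeInInterior
      (fun c => p ≤ c.1 ∧ c.1 ≤ p + (k : ℤ) - 1 ∧ q ≤ c.2 ∧ c.2 ≤ q + (k : ℤ) - 1) e := by
  obtain ⟨hL, hR, hT⟩ := hrigid
  -- From the rightmost rigid edge, deduce `1 ≤ q` (its base vertex lies in the ladder).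
  have hq1 : 1 ≤ q := by
    obtain ⟨P, hP, hmem, _⟩ := hE.1 _ hR
    obtain ⟨i, hi, hPi, _⟩ := hmem
    have hv := hP.2.2 i (le_of_lt hi)
    obtain ⟨j, -, -, -, h0v, -⟩ := hv
    rw [hPi] at h0v
    simp only at h0v
    omega
  intro e he hint
  obtain ⟨P, hP, heP, hPE⟩ := hE.1 e he
  obtain ⟨h000, hstep, hlad⟩ := hP
  obtain ⟨i, hi, hPi, hPi1⟩ := heP
  obtain ⟨hb1, hb2⟩ := hint
  -- The base vertex of `e` lies in the open square `S`, otherwise `e` is interior to `L`.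
  have hw : p ≤ e.1.1 ∧ e.1.1 ≤ p + (k : ℤ) - 2 ∧ q ≤ e.1.2 ∧ e.1.2 ≤ q + (k : ℤ) - 2 := by
    rcases e with ⟨⟨a, b⟩, dir⟩
    cases dir
    · simp only [adjBox1, adjBox2] at hb1 hb2
      dsimp only
      by_cases ha : p ≤ a
      · exact ⟨ha, by omega, by omega, by omega⟩
      · exfalso
        apply hL ((a, b), false) he
        simp only [EdgeInInterior, adjBox1, adjBox2, InLBlock]
        omega
    · simp only [adjBox1, adjBox2] at hb1 hb2
      dsimp only
      by_cases hb : q ≤ b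
      · exact ⟨by omega, by omega, hb, by omega⟩
      · exfalso
        apply hL ((a, b), true) he
        simp only [EdgeInInterior, adjBox1, adjBox2, InLBlock]
        omega
  -- The path enters the quadrant `[p, ∞) × [q, ∞)` at some step `j`.
  have h0 : ¬ (p ≤ (P 0).1 ∧ q ≤ (P 0).2) := by
    rw [h000]; simp only; omega
  have hiR : p ≤ (P i).1 ∧ q ≤ (P i).2 := by
    rw [hPi]; exact ⟨hw.1, hw.2.2.1⟩
  obtain ⟨j, hj, hjn, hje⟩ := exists_entry (fun m => p ≤ (P m).1 ∧ q ≤ (P m).2) i h0 hiR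
  have hmon := path_mono hstep j i (le_of_lt hj) (le_of_lt hi)
  rw [hPi] at hmon
  have hjlt : j < n := lt_trans hj hi
  rcases hstep j hjlt with hs | hs
  · -- horizontal entering step: `P j = (p - 1, y)` with `q ≤ y ≤ q + k - 2`
    have h1 : (P (j + 1)).1 = (P j).1 + 1 ∧ (P (j + 1)).2 = (P j).2 := by
      rw [hs]; simp [edir]
    have hEj : (P j, false) ∈ E := hPE ⟨j, hjlt, rfl, hs⟩
    apply hL (P j, false) hEj
    simp only [EdgeInInterior, adjBox1, adjBox2, InLBlock]
    omega
  · -- vertical entering step: `P j = (x, q - 1)` with `p ≤ x ≤ p + k - 2`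
    have h1 : (P (j + 1)).1 = (P j).1 ∧ (P (j + 1)).2 = (P j).2 + 1 := by
      rw [hs]; simp [edir]
    have hEj : (P j, true) ∈ E := hPE ⟨j, hjlt, rfl, hs⟩
    apply hL (P j, true) hEj
    simp only [EdgeInInterior, adjBox1, adjBox2, InLBlock]
    omega
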